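/- For any matrix A in the real symplectic group Sp(2n,ℝ), the matrix A(AᵀA)^{-1/2} belongs to U(n) = Sp(2n,ℝ) ∩ O(2n). -/

import Mathlib

open Matrix

open scoped ComplexOrder in
/-- The positive semidefinite square root of a positive semidefinite matrix
(removed from Mathlib; restored here with its old definition). -/
noncomputable def Matrix.PosSemidef.sqrt {n : Type*} [Fintype n] [DecidableEq n] {𝕜 : Type*}
    [RCLike 𝕜] {A : Matrix n n 𝕜} (hA : A.PosSemidef) : Matrix n n 𝕜 :=
  hA.1.eigenvectorUnitary.1 * diagonal ((↑) ∘ (√·) ∘ hA.1.eigenvalues) *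
  (star hA.1.eigenvectorUnitary : Matrix n n 𝕜)

open scoped MatrixOrder in
lemma Matrix.PosSemidef.sqrt_eq_cfc_sqrt {n : Type*} [Fintype n] [DecidableEq n]
    {A : Matrix n n ℝ} (hA : A.PosSemidef) : hA.sqrt = CFC.sqrt A := by
  rw [CFC.sqrt_eq_real_sqrt A hA.nonneg, cfcₙ_eq_cfc (hf0 := Real.sqrt_zero), hA.1.cfc_eq]
  simp [Matrix.PosSemidef.sqrt, IsHermitian.cfc]

open scoped MatrixOrder in
lemma Matrix.PosSemidef.posSemidef_sqrt {n : Type*} [Fintype n] [DecidableEq n]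
    {A : Matrix n n ℝ} (hA : A.PosSemidef) : hA.sqrt.PosSemidef := by
  rw [hA.sqrt_eq_cfc_sqrt]; exact (CFC.sqrt_nonneg A).posSemidef

open scoped MatrixOrder in
lemma Matrix.PosSemidef.sqrt_mul_self {n : Type*} [Fintype n] [DecidableEq n]
    {A : Matrix n n ℝ} (hA : A.PosSemidef) : hA.sqrt * hA.sqrt = A := by
  rw [hA.sqrt_eq_cfc_sqrt]; exact CFC.sqrt_mul_sqrt_self A hA.nonneg

open scoped MatrixOrder in
lemma Matrix.PosSemidef.eq_sqrt_of_sq_eq {n : Type*} [Fintype n] [DecidableEq n]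
    {B : Matrix n n ℝ} (hB : B.PosSemidef) {A : Matrix n n ℝ} (hA : A.PosSemidef)
    (h : B ^ 2 = A) : B = hA.sqrt := by
  rw [hA.sqrt_eq_cfc_sqrt]
  exact (CFC.sqrt_unique (by rw [← sq]; exact h) hB.nonneg).symm

/-- The retraction `r(A) = A * (AᵀA)^{-1/2}` from `Sp(2n,ℝ)` to `U(n)`,
where `(AᵀA)^{1/2}` is the positive (semi)definite square root of `AᵀA = AᴴA`. -/
noncomputable def symplecticRetract {l : Type*} [DecidableEq l] [Fintype l]
    (A : Matrix (l ⊕ l) (l ⊕ l) ℝ) : Matrix (l ⊕ l) (l ⊕ l) ℝ :=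
  A * ((Matrix.posSemidef_conjTranspose_mul_self A).sqrt)⁻¹

/-- For any `A ∈ Sp(2n,ℝ)`, the matrix `r(A) = A (AᵀA)^{-1/2}` belongs to
`U(n) = Sp(2n,ℝ) ∩ O(2n)`, i.e. it is symplectic and orthogonal. -/
theorem retract_mem_unitary {l : Type*} [DecidableEq l] [Fintype l]
    (A : Matrix (l ⊕ l) (l ⊕ l) ℝ) (hA : A ∈ Matrix.symplecticGroup l ℝ) :
    symplecticRetract A ∈ Matrix.symplecticGroup l ℝ ∧
      (symplecticRetract A)ᵀ * symplecticRetract A = 1 := by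
  classical
  set S : Matrix (l ⊕ l) (l ⊕ l) ℝ :=
    (Matrix.posSemidef_conjTranspose_mul_self A).sqrt with hSdef
  set Jm : Matrix (l ⊕ l) (l ⊕ l) ℝ := Matrix.J l ℝ with hJ
  have hAconj : Aᴴ = Aᵀ := Matrix.conjTranspose_eq_transpose_of_trivial A
  have hSpsd : S.PosSemidef :=
    (Matrix.posSemidef_conjTranspose_mul_self A).posSemidef_sqrt
  have hSsym : Sᵀ = S := by
    have := hSpsd.isHermitian
    rwa [Matrix.IsHermitian, Matrix.conjTranspose_eq_transpose_of_trivial] at this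
  have hSsq : S * S = Aᵀ * A := by
    rw [← hAconj]
    exact (Matrix.posSemidef_conjTranspose_mul_self A).sqrt_mul_self
  -- A is invertible, hence so is S
  have hdetA : IsUnit A.det := SymplecticGroup.symplectic_det hA
  have hdetS : IsUnit S.det := by
    have h2 : S.det * S.det = Aᵀ.det * A.det := by rw [← Matrix.det_mul, hSsq, Matrix.det_mul]
    have : IsUnit (S.det * S.det) := by
      rw [h2, Matrix.det_transpose]; exact hdetA.mul hdetA
    exact isUnit_of_mul_isUnit_left this
  have hSS : S⁻¹ * S = 1 := Matrix.nonsing_inv_mul S hdetS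
  have hSS' : S * S⁻¹ = 1 := Matrix.mul_nonsing_inv S hdetS
  have hSinvT : (S⁻¹)ᵀ = S⁻¹ := by rw [Matrix.transpose_nonsing_inv, hSsym]
  -- J facts
  have hJJt : Jm * Jmᵀ = 1 := by
    rw [hJ, Matrix.J_transpose, Matrix.mul_neg, Matrix.J_squared]; simp
  have hJtJ : Jmᵀ * Jm = 1 := by
    rw [hJ, Matrix.J_transpose, Matrix.neg_mul, Matrix.J_squared]; simp
  have hJtJ' : ∀ M : Matrix (l ⊕ l) (l ⊕ l) ℝ, Jmᵀ * (Jm * M) = M := fun M => by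
    rw [← Matrix.mul_assoc, hJtJ, Matrix.one_mul]
  have hSsq' : ∀ M : Matrix (l ⊕ l) (l ⊕ l) ℝ, S * (S * M) = Aᵀ * (A * M) := fun M => by
    rw [← Matrix.mul_assoc, hSsq, Matrix.mul_assoc]
  -- P = AᵀA is symplectic
  have hP_mem : Aᵀ * A ∈ Matrix.symplecticGroup l ℝ :=
    Submonoid.mul_mem _ (SymplecticGroup.transpose_mem hA) hA
  have hPJP : Aᵀ * (A * (Jm * (Aᵀ * A))) = Jm := by
    have := (SymplecticGroup.mem_iff).mp hP_mem
    rw [Matrix.transpose_mul, Matrix.transpose_transpose] at this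
    simpa only [Matrix.mul_assoc] using this
  have hPJtP : Aᵀ * (A * (Jmᵀ * (Aᵀ * A))) = Jmᵀ := by
    rw [hJ, Matrix.J_transpose, ← hJ]
    simp only [Matrix.mul_neg, Matrix.neg_mul, hPJP]
  -- X = J S Jᵀ is a psd square root of (AᴴA)⁻¹
  have hPinv : Matrix.PosSemidef (Aᴴ * A)⁻¹ :=
    (Matrix.posSemidef_conjTranspose_mul_self A).inv
  have hX : Matrix.PosSemidef (Jm * S * Jmᵀ) := by
    have := hSpsd.mul_mul_conjTranspose_same Jm
    rwa [Matrix.conjTranspose_eq_transpose_of_trivial Jm] at this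
  have hXsq : (Jm * S * Jmᵀ) ^ 2 = (Aᴴ * A)⁻¹ := by
    rw [hAconj]
    refine (Matrix.inv_eq_left_inv ?_).symm
    rw [pow_two]
    simp only [Matrix.mul_assoc]
    rw [hJtJ', hSsq', hPJtP, hJJt]
  have hSinvSq : (S⁻¹) ^ 2 = (Aᴴ * A)⁻¹ := by
    rw [pow_two, ← Matrix.mul_inv_rev, hSsq, hAconj]
  have hSinvPsd : Matrix.PosSemidef S⁻¹ := hSpsd.inv
  -- uniqueness of the psd square root
  have hXeq : Jm * S * Jmᵀ = S⁻¹ := by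
    rw [hX.eq_sqrt_of_sq_eq hPinv hXsq, hSinvPsd.eq_sqrt_of_sq_eq hPinv hSinvSq]
  -- hence S J S = J
  have hSJS : S * (Jm * S) = Jm := by
    have h1 : S * (Jm * (S * Jmᵀ)) = 1 := by
      have := congrArg (fun M => S * M) hXeq
      simpa only [Matrix.mul_assoc, hSS'] using this
    calc S * (Jm * S) = S * (Jm * S) * (Jmᵀ * Jm) := by rw [hJtJ, Matrix.mul_one]
      _ = (S * (Jm * (S * Jmᵀ))) * Jm := by simp only [Matrix.mul_assoc]
      _ = Jm := by rw [h1, Matrix.one_mul]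
  have hSinvJ : S⁻¹ * (Jm * S⁻¹) = Jm := by
    conv_lhs => rw [← hSJS]
    calc S⁻¹ * (S * (Jm * S) * S⁻¹) = (S⁻¹ * S) * (Jm * (S * S⁻¹)) := by
          simp only [Matrix.mul_assoc]
      _ = Jm := by rw [hSS, hSS', Matrix.one_mul, Matrix.mul_one]
  constructor
  · rw [SymplecticGroup.mem_iff']
    have hAJ : Aᵀ * Jm * A = Jm := (SymplecticGroup.mem_iff').mp hA
    show (A * S⁻¹)ᵀ * Jm * (A * S⁻¹) = Jm
    rw [Matrix.transpose_mul, hSinvT]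
    calc S⁻¹ * Aᵀ * Jm * (A * S⁻¹) = S⁻¹ * (Aᵀ * Jm * A) * S⁻¹ := by
          simp only [Matrix.mul_assoc]
      _ = S⁻¹ * Jm * S⁻¹ := by rw [hAJ]
      _ = Jm := by rw [Matrix.mul_assoc]; exact hSinvJ
  · show (A * S⁻¹)ᵀ * (A * S⁻¹) = 1
    rw [Matrix.transpose_mul, hSinvT]
    calc S⁻¹ * Aᵀ * (A * S⁻¹) = S⁻¹ * (Aᵀ * A) * S⁻¹ := by simp only [Matrix.mul_assoc]
      _ = S⁻¹ * (S * S) * S⁻¹ := by rw [hSsq]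
      _ = (S⁻¹ * S) * (S * S⁻¹) := by simp only [Matrix.mul_assoc]
      _ = 1 := by rw [hSS, hSS', Matrix.one_mul]
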